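/- Every ℝ-algebra automorphism φ of the quaternion algebra ℍ, regarded as an ℝ-linear endomorphism of the 4-dimensional real vector space ℍ, has determinant 1. (This is the orientation-preserving part of the paper's claim that the automorphism group of ℍ is SO(3) rather than O(3).) -/

import Mathlib

open Quaternion

lemma sq_eq_neg_one_aux (q : ℍ) (h : q * q = -1) :
    q.re = 0 ∧ q.imI^2 + q.imJ^2 + q.imK^2 = 1 := by
  have h1 := congrArg QuaternionAlgebra.re h
  have h2 := congrArg QuaternionAlgebra.imI h
  have h3 := congrArg QuaternionAlgebra.imJ h
  have h4 := congrArg QuaternionAlgebra.imK h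
  simp [Quaternion.re_mul, Quaternion.imI_mul, Quaternion.imJ_mul, Quaternion.imK_mul] at h1 h2 h3 h4
  have hre : q.re = 0 := by nlinarith [sq_nonneg q.re, sq_nonneg q.imI, sq_nonneg q.imJ, sq_nonneg q.imK]
  exact ⟨hre, by nlinarith⟩

theorem quaternion_alg_aut_det_one (φ : Quaternion ℝ ≃ₐ[ℝ] Quaternion ℝ) :
    LinearMap.det (φ.toLinearMap) = 1 := by
  set b : Module.Basis (Fin 4) ℝ (Quaternion ℝ) := QuaternionAlgebra.basisOneIJK (-1 : ℝ) 0 (-1) with hb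
  have hrep : ∀ (q : Quaternion ℝ) (idx : Fin 4),
      b.repr q idx = ![q.re, q.imI, q.imJ, q.imK] idx :=
    fun q idx => congrFun (QuaternionAlgebra.coe_basisOneIJK_repr (c₁ := -1) (c₂ := 0) (c₃ := -1) q) idx
  have hbval : ∀ idx : Fin 4, b idx =
      ![(1 : ℍ), ⟨0,1,0,0⟩, ⟨0,0,1,0⟩, ⟨0,0,0,1⟩] idx := by
    intro idx
    apply b.repr.injective
    ext j
    rw [b.repr_self_apply]
    fin_cases idx <;> fin_cases j <;>
      (rw [hrep]; simp)
  have hb0 : b 0 = (1 : ℍ) := by simpa using hbval 0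
  have hb1 : b 1 = (⟨0,1,0,0⟩ : ℍ) := by simpa using hbval 1
  have hb2 : b 2 = (⟨0,0,1,0⟩ : ℍ) := by simpa using hbval 2
  have hb3 : b 3 = (⟨0,0,0,1⟩ : ℍ) := by simpa using hbval 3
  set x := φ (b 1) with hxdef
  set y := φ (b 2) with hydef
  set z := φ (b 3) with hzdef
  have hmul11 : b 1 * b 1 = -1 := by rw [hb1]; exact (by ext <;> simp [Quaternion.re_mul, Quaternion.imI_mul, Quaternion.imJ_mul, Quaternion.imK_mul] : (⟨0,1,0,0⟩ : ℍ) * ⟨0,1,0,0⟩ = -1)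
  have hmul33 : b 3 * b 3 = -1 := by rw [hb3]; exact (by ext <;> simp [Quaternion.re_mul, Quaternion.imI_mul, Quaternion.imJ_mul, Quaternion.imK_mul] : (⟨0,0,0,1⟩ : ℍ) * ⟨0,0,0,1⟩ = -1)
  have hmul12 : b 1 * b 2 = b 3 := by rw [hb1, hb2, hb3]; exact (by ext <;> simp [Quaternion.re_mul, Quaternion.imI_mul, Quaternion.imJ_mul, Quaternion.imK_mul] : (⟨0,1,0,0⟩ : ℍ) * ⟨0,0,1,0⟩ = ⟨0,0,0,1⟩)
  have hx : x * x = -1 := by rw [hxdef, ← map_mul, hmul11, map_neg, map_one]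
  have hz : z * z = -1 := by rw [hzdef, ← map_mul, hmul33, map_neg, map_one]
  have hxy : x * y = z := by rw [hxdef, hydef, hzdef, ← map_mul, hmul12]
  obtain ⟨hxre, -⟩ := sq_eq_neg_one_aux x hx
  obtain ⟨hzre, hznorm⟩ := sq_eq_neg_one_aux z hz
  have hmul22 : b 2 * b 2 = -1 := by rw [hb2]; exact (by ext <;> simp [Quaternion.re_mul, Quaternion.imI_mul, Quaternion.imJ_mul, Quaternion.imK_mul] : (⟨0,0,1,0⟩ : ℍ) * ⟨0,0,1,0⟩ = -1)
  have hy : y * y = -1 := by rw [hydef, ← map_mul, hmul22, map_neg, map_one]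
  obtain ⟨hyre, -⟩ := sq_eq_neg_one_aux y hy
  have hφ1 : φ (b 0) = 1 := by rw [hb0, map_one]
  rw [← LinearMap.det_toMatrix b]
  have hM : LinearMap.toMatrix b b φ.toLinearMap =
      !![1, 0, 0, 0; 0, x.imI, y.imI, z.imI; 0, x.imJ, y.imJ, z.imJ; 0, x.imK, y.imK, z.imK] := by
    ext i j
    rw [LinearMap.toMatrix_apply, hrep]
    fin_cases i <;> fin_cases j <;>
      simp [hφ1, ← hxdef, ← hydef, ← hzdef, hxre, hyre, hzre, Matrix.vecHead, Matrix.vecTail]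
  rw [hM]
  have e1 := congrArg QuaternionAlgebra.imI hxy
  have e2 := congrArg QuaternionAlgebra.imJ hxy
  have e3 := congrArg QuaternionAlgebra.imK hxy
  simp [Quaternion.imI_mul, Quaternion.imJ_mul, Quaternion.imK_mul, hxre, hyre] at e1 e2 e3
  simp [Matrix.det_succ_row_zero, Fin.sum_univ_succ]
  linear_combination z.imI * e1 + z.imJ * e2 + z.imK * e3 + hznorm
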